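/- Let T : 𝕋 → 𝕋 be as above (T(x) = x(1+V(x)) mod 1 with N_V = 1 + V(1) inverse branches, indifferent fixed point 0). For every ε ∈ (0,1) there exists ρ > 0 such that for all x, y ∈ [ε, 1) with d(x,y) < ρ, d(T(x),T(y)) ≥ (1 + V(ε))·d(x,y). That is, T is uniformly expanding outside any neighborhood of the fixed point. -/

import Mathlib

open Real Set

/-- The circle metric on `[0,1)`: `d(x,y) = min{|x−y|, |x−y−1|, |x−y+1|}`. -/
noncomputable def cdist (x y : ℝ) : ℝ := min |x - y| (min |x - y - 1| |x - y + 1|)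

/-- The map `T(x) = x(1 + V(x)) mod 1` on the circle represented as `[0,1)`. -/
noncomputable def circMap (V : ℝ → ℝ) (x : ℝ) : ℝ := Int.fract (x * (1 + V x))

lemma cdist_comm' (x y : ℝ) : cdist x y = cdist y x := by
  unfold cdist
  rw [abs_sub_comm, min_comm |x - y - 1| _]
  congr 1
  congr 1
  · rw [← abs_neg]; congr 1; ring
  · rw [← abs_neg]; congr 1; ring

lemma cdist_fract_ge (a b : ℝ) (h : |a - b| ≤ 1/2) :
    |a - b| ≤ cdist (Int.fract a) (Int.fract b) := by
  have key : ∀ m : ℤ, |a - b| ≤ |(a - b) - m| := by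
    intro m
    rcases eq_or_ne m 0 with rfl | hm
    · simp
    · have h1 : (1:ℝ) ≤ |(m:ℝ)| := by exact_mod_cast Int.one_le_abs hm
      have h2 : |(m:ℝ)| - |a - b| ≤ |(m:ℝ) - (a - b)| := abs_sub_abs_le_abs_sub _ _
      rw [abs_sub_comm (m:ℝ) (a - b)] at h2
      linarith
  have hu : Int.fract a - Int.fract b = (a - b) - ((⌊a⌋ - ⌊b⌋ : ℤ) : ℝ) := by
    unfold Int.fract; push_cast; ring
  unfold cdist
  refine le_min ?_ (le_min ?_ ?_)
  · rw [hu]; exact key _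
  · have : Int.fract a - Int.fract b - 1 = (a - b) - ((⌊a⌋ - ⌊b⌋ + 1 : ℤ) : ℝ) := by
      rw [hu]; push_cast; ring
    rw [this]; exact key _
  · have : Int.fract a - Int.fract b + 1 = (a - b) - ((⌊a⌋ - ⌊b⌋ - 1 : ℤ) : ℝ) := by
      rw [hu]; push_cast; ring
    rw [this]; exact key _

/-- Uniform expansion outside any neighborhood of the indifferent fixed point:
for every `ε ∈ (0,1)` there is `ρ > 0` such that for all `x, y ∈ [ε, 1)` with
`d(x,y) < ρ`, `d(T(x),T(y)) ≥ (1 + V(ε)) d(x,y)`. -/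
theorem uniform_expansion_outside (V : ℝ → ℝ) (N : ℕ) (hN : 0 < N)
    (hV0 : V 0 = 0) (hV1 : V 1 = N) (hVnn : ∀ x, 0 ≤ x → 0 ≤ V x)
    (hVcont : ContinuousOn V (Ici 0)) (hVmono : StrictMonoOn V (Ici 0)) :
    ∀ ε : ℝ, 0 < ε → ε < 1 → ∃ ρ > 0, ∀ x ∈ Ico ε 1, ∀ y ∈ Ico ε 1,
      cdist x y < ρ → (1 + V ε) * cdist x y ≤ cdist (circMap V x) (circMap V y) := by
  intro ε hε hε1
  -- uniform continuity of V on [0,1]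
  have hUC : UniformContinuousOn V (Icc (0:ℝ) 1) :=
    isCompact_Icc.uniformContinuousOn_of_continuous (hVcont.mono Icc_subset_Ici_self)
  rw [Metric.uniformContinuousOn_iff] at hUC
  obtain ⟨r, hr, hUC⟩ := hUC (1/4) (by norm_num)
  refine ⟨min (min r (1/(8*(N+1)))) ε, by positivity, ?_⟩
  intro x hx y hy hd
  have hρr : min (min r (1/(8*(N+1)))) ε ≤ r := le_trans (min_le_left _ _) (min_le_left _ _)
  have hρ8 : min (min r (1/(8*(N+1)))) ε ≤ 1/(8*(N+1)) :=
    le_trans (min_le_left _ _) (min_le_right _ _)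
  have hρε : min (min r (1/(8*(N+1)))) ε ≤ ε := min_le_right _ _
  -- cdist x y = |x - y|
  have hxy1 : |x - y| < 1 - ε := by
    rw [abs_sub_lt_iff]
    constructor <;> [linarith [hx.2, hy.1]; linarith [hy.2, hx.1]]
  have hB : ε ≤ min |x - y - 1| |x - y + 1| := by
    refine le_min ?_ ?_
    · rcases abs_sub_lt_iff.mp hxy1 with ⟨h1, h2⟩
      rw [abs_sub_comm, abs_of_pos (by linarith)]; linarith
    · rcases abs_sub_lt_iff.mp hxy1 with ⟨h1, h2⟩
      rw [abs_of_pos (by linarith)]; linarith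
  have hA : |x - y| < min (min r (1/(8*(N+1)))) ε := by
    by_contra hA
    push_neg at hA
    have : min (min r (1/(8*(N+1)))) ε ≤ cdist x y :=
      le_min hA (le_trans hρε hB)
    linarith
  have hcd : cdist x y = |x - y| := min_eq_left (le_trans hA.le (le_trans hρε hB))
  -- monotonicity facts
  have hmem : ∀ z ∈ Ico ε 1, z ∈ Ici (0:ℝ) := fun z hz => le_trans hε.le hz.1
  have hVmon := hVmono.monotoneOn
  have hVεx : V ε ≤ V x := hVmon (le_of_lt hε) (hmem x hx) hx.1
  have hVεy : V ε ≤ V y := hVmon (le_of_lt hε) (hmem y hy) hy.1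
  have hVxN : V x ≤ N := hV1 ▸ hVmon (hmem x hx) (by norm_num) hx.2.le
  have hVyN : V y ≤ N := hV1 ▸ hVmon (hmem y hy) (by norm_num) hy.2.le
  have hVx0 : 0 ≤ V x := hVnn x (hmem x hx)
  have hVy0 : 0 ≤ V y := hVnn y (hmem y hy)
  have hVε0 : 0 ≤ V ε := hVnn ε hε.le
  -- V x close to V y
  have hVxy : |V x - V y| < 1/4 := by
    have := hUC x ⟨hmem x hx, hx.2.le⟩ y ⟨hmem y hy, hy.2.le⟩
      (by rw [Real.dist_eq]; exact lt_of_lt_of_le hA hρr)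
    rwa [Real.dist_eq] at this
  -- upper bound on lift difference
  have hxysmall : |x - y| ≤ 1/(8*(N+1)) := le_trans hA.le hρ8
  have hDup : |x * (1 + V x) - y * (1 + V y)| ≤ 1/2 := by
    have e : x * (1 + V x) - y * (1 + V y) = (x - y) + x * (V x - V y) + (x - y) * V y := by
      ring
    rw [e]
    have h1 : |(x - y) + x * (V x - V y) + (x - y) * V y|
        ≤ |x - y| + |x * (V x - V y)| + |(x - y) * V y| := by
      calc |(x - y) + x * (V x - V y) + (x - y) * V y|
          ≤ |(x - y) + x * (V x - V y)| + |(x - y) * V y| := abs_add_le _ _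
        _ ≤ |x - y| + |x * (V x - V y)| + |(x - y) * V y| := by
            linarith [abs_add_le (x - y) (x * (V x - V y))]
    have h2 : |x * (V x - V y)| ≤ |V x - V y| := by
      rw [abs_mul]
      calc |x| * |V x - V y| ≤ 1 * |V x - V y| := by
            apply mul_le_mul_of_nonneg_right _ (abs_nonneg _)
            rw [abs_of_nonneg (hmem x hx)]; exact hx.2.le
        _ = |V x - V y| := one_mul _
    have h3 : |(x - y) * V y| ≤ |x - y| * N := by
      rw [abs_mul, abs_of_nonneg hVy0]
      exact mul_le_mul_of_nonneg_left hVyN (abs_nonneg _)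
    have h4 : |x - y| * (N:ℝ) + |x - y| ≤ 1/8 := by
      have : |x - y| * ((N:ℝ) + 1) ≤ (1/(8*(N+1))) * ((N:ℝ) + 1) := by
        apply mul_le_mul_of_nonneg_right hxysmall (by positivity)
      have hne : ((N:ℝ) + 1) ≠ 0 := by positivity
      rw [div_mul_eq_mul_div, one_mul] at this
      calc |x - y| * (N:ℝ) + |x - y| = |x - y| * ((N:ℝ) + 1) := by ring
        _ ≤ ((N:ℝ) + 1) / (8*(N+1)) := this
        _ = 1/8 := by field_simp
    linarith
  -- symmetric reduction
  wlog hxyle : x ≤ y generalizing x y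
  · rw [cdist_comm' x y, cdist_comm' (circMap V x) (circMap V y)]
    have e1 : |y - x - 1| = |x - y + 1| := by rw [← abs_neg]; congr 1; ring
    have e2 : |y - x + 1| = |x - y - 1| := by rw [← abs_neg]; congr 1; ring
    exact this y hy x hx (by rwa [cdist_comm' y x]) (by rwa [abs_sub_comm y x])
      (by rw [e1, e2, min_comm]; exact hB)
      (by rwa [abs_sub_comm y x]) (by rw [cdist_comm' y x, abs_sub_comm y x]; exact hcd)
      hVεy hVεx hVyN hVxN hVy0 hVx0
      (by rwa [abs_sub_comm (V y) (V x)]) (by rwa [abs_sub_comm y x])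
      (by rwa [abs_sub_comm (y * (1 + V y)) (x * (1 + V x))]) (le_of_not_ge hxyle)
  -- lower bound
  have hDlow : (1 + V ε) * |x - y| ≤ |x * (1 + V x) - y * (1 + V y)| := by
    have hyx : y * (1 + V y) - x * (1 + V x)
        = (y - x) * (1 + V x) + y * (V y - V x) := by ring
    have hVxy' : V x ≤ V y := hVmon (hmem x hx) (hmem y hy) hxyle
    have hge : (1 + V ε) * (y - x) ≤ y * (1 + V y) - x * (1 + V x) := by
      rw [hyx]
      have hy0 : (0:ℝ) ≤ y := hmem y hy
      nlinarith [mul_nonneg hy0 (sub_nonneg.mpr hVxy'), sub_nonneg.mpr hxyle,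
        sub_nonneg.mpr hVεx]
    have hnn : (0:ℝ) ≤ y * (1 + V y) - x * (1 + V x) := by
      nlinarith [mul_nonneg (by linarith : (0:ℝ) ≤ 1 + V ε) (sub_nonneg.mpr hxyle)]
    rw [abs_sub_comm (x * (1 + V x)) (y * (1 + V y)), abs_of_nonneg hnn,
      abs_sub_comm x y, abs_of_nonneg (sub_nonneg.mpr hxyle)]
    exact hge
  calc (1 + V ε) * cdist x y = (1 + V ε) * |x - y| := by rw [hcd]
    _ ≤ |x * (1 + V x) - y * (1 + V y)| := hDlow
    _ ≤ cdist (circMap V x) (circMap V y) := cdist_fract_ge _ _ hDup
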